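/- Let ε ∈ (0,1) and set p = 1 + ε. Let x, y, z, w be integers with 1 ≤ x < z ≤ w < y, x + y = z + w, and ⌊x^p⌋ + ⌊y^p⌋ = ⌊z^p⌋ + ⌊w^p⌋. Then z − x < 4y/(ε·(y−x)). -/

import Mathlib

set_option maxHeartbeats 1000000

open Set Real

/-- Concave shift inequality for `x ↦ x^ε`. -/
lemma shift_le {ε : ℝ} (hε0 : 0 < ε) (hε1 : ε < 1) {c w d : ℝ}
    (hc : 0 ≤ c) (hcw : c ≤ w) (hd : 0 < d) :
    (w + d) ^ ε - w ^ ε ≤ (c + d) ^ ε - c ^ ε := by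
  rcases eq_or_lt_of_le hcw with rfl | hcw
  · exact le_refl _
  have hcon := Real.concaveOn_rpow hε0.le hε1.le
  have hLpos : (0:ℝ) < w + d - c := by linarith
  have hL : w + d - c ≠ 0 := hLpos.ne'
  set a : ℝ := (w - c)/(w + d - c) with ha
  set b : ℝ := d/(w + d - c) with hb
  have hab : a + b = 1 := by rw [ha, hb]; field_simp; ring
  have h1 : a * c ^ ε + b * (w + d) ^ ε ≤ (c + d) ^ ε := by
    have := hcon.2 (mem_Ici.2 hc) (mem_Ici.2 (by linarith : (0:ℝ) ≤ w + d))
      (div_nonneg (by linarith : (0:ℝ) ≤ w - c) hLpos.le) (div_nonneg hd.le hLpos.le) hab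
    have harg : a • c + b • (w + d) = c + d := by
      rw [smul_eq_mul, smul_eq_mul, ha, hb]; field_simp; ring
    rw [harg] at this
    simpa using this
  have h2 : b * c ^ ε + a * (w + d) ^ ε ≤ w ^ ε := by
    have := hcon.2 (mem_Ici.2 hc) (mem_Ici.2 (by linarith : (0:ℝ) ≤ w + d))
      (div_nonneg hd.le hLpos.le) (div_nonneg (by linarith : (0:ℝ) ≤ w - c) hLpos.le) (by linarith : b + a = 1)
    have harg : b • c + a • (w + d) = w := by
      rw [smul_eq_mul, smul_eq_mul, ha, hb]; field_simp; ring
    rw [harg] at this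
    simpa using this
  have ec : (a + b) * c ^ ε = c ^ ε := by rw [hab, one_mul]
  have ew : (a + b) * (w + d) ^ ε = (w + d) ^ ε := by rw [hab, one_mul]
  linarith [h1, h2, ec, ew]

lemma key_real (ε p : ℝ) (hε0 : 0 < ε) (hε1 : ε < 1) (hp : p = 1 + ε)
    (X Y Z W : ℝ) (hX1 : 1 ≤ X) (hXZ : X < Z) (hZW : Z ≤ W) (hWY : W < Y)
    (hS : X + Y = Z + W) (hD2 : X ^ p + Y ^ p < Z ^ p + W ^ p + 2) :
    Z - X < 4 * Y / (ε * (Y - X)) := by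
  have hp1 : 1 < p := by rw [hp]; linarith
  set d : ℝ := Z - X with hdd
  have hd0 : 0 < d := by rw [hdd]; linarith
  have hZd : X + d = Z := by rw [hdd]; ring
  have hYd : W + d = Y := by rw [hdd]; linarith
  have hXW : X < W := lt_of_lt_of_le hXZ hZW
  set g : ℝ → ℝ := fun t => (t + d) ^ p - t ^ p with hg
  set g' : ℝ → ℝ := fun t => p * (t + d) ^ (p - 1) - p * t ^ (p - 1) with hg'
  have hcont : ContinuousOn g (Icc X W) := by
    apply ContinuousOn.sub
    · exact (continuousOn_id.add continuousOn_const).rpow_const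
        (fun t _ => Or.inr (by linarith))
    · exact continuousOn_id.rpow_const (fun t _ => Or.inr (by linarith))
  have hderiv : ∀ t ∈ Ioo X W, HasDerivAt g (g' t) t := by
    intro t ht
    have ht0 : (0:ℝ) < t := lt_of_lt_of_le (by linarith) ht.1.le
    have h1 : HasDerivAt (fun t : ℝ => (t + d) ^ p) (1 * p * (t + d) ^ (p - 1)) t :=
      ((hasDerivAt_id t).add_const d).rpow_const (Or.inl (by positivity))
    have h2 : HasDerivAt (fun t : ℝ => t ^ p) (p * t ^ (p - 1)) t :=
      Real.hasDerivAt_rpow_const (Or.inl ht0.ne')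
    have h3 := h1.sub h2
    rw [one_mul] at h3
    exact h3
  obtain ⟨c, hc, hceq⟩ := exists_hasDerivAt_eq_slope g g' hXW hcont hderiv
  have hc1 : 1 ≤ c := le_trans hX1 hc.1.le
  have hDval : Y ^ p - W ^ p - (Z ^ p - X ^ p) = (W - X) * g' c := by
    have h := hceq
    rw [eq_div_iff (by linarith : W - X ≠ 0)] at h
    have hgW : g W = Y ^ p - W ^ p := by rw [hg]; simp [hYd]
    have hgX : g X = Z ^ p - X ^ p := by rw [hg]; simp [hZd]
    rw [hgW, hgX] at h
    linarith [h]
  -- lower bound g' c by g' W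
  have hCw : p * ((W + d) ^ (p - 1) - W ^ (p - 1)) ≤ g' c := by
    have hsh := shift_le (by rw [hp] at *; simpa using hε0) (by rw [hp]; simpa using hε1)
      (by linarith : (0:ℝ) ≤ c) hc.2.le hd0 (ε := p - 1)
    simp only [hg']
    have := mul_le_mul_of_nonneg_left hsh (by linarith : (0:ℝ) ≤ p)
    linarith
  -- Bernoulli: Y^(p-1) - W^(p-1) ≥ (p-1) * d / Y
  have hY0 : (0:ℝ) < Y := by linarith
  have hW0 : (0:ℝ) ≤ W := by linarith
  have hbern : (p - 1) * d / Y ≤ Y ^ (p - 1) - W ^ (p - 1) := by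
    have hs : (-1:ℝ) ≤ W / Y - 1 := by
      have : (0:ℝ) ≤ W / Y := by positivity
      linarith
    have hb := rpow_one_add_le_one_add_mul_self hs (by linarith : (0:ℝ) ≤ p - 1)
      (by linarith : p - 1 ≤ 1)
    have h1s : 1 + (W / Y - 1) = W / Y := by ring
    rw [h1s] at hb
    -- hb : (W/Y)^(p-1) ≤ 1 + (p-1)*(W/Y - 1)
    have hYe1 : 1 ≤ Y ^ (p - 1) := Real.one_le_rpow (by linarith) (by linarith)
    have hWe : W ^ (p - 1) = (W / Y) ^ (p - 1) * Y ^ (p - 1) := by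
      rw [← Real.mul_rpow (by positivity) hY0.le, div_mul_cancel₀ _ hY0.ne']
    have hYe0 : (0:ℝ) < Y ^ (p - 1) := by positivity
    have hmul : (W / Y) ^ (p - 1) * Y ^ (p - 1) ≤ (1 + (p - 1) * (W / Y - 1)) * Y ^ (p - 1) :=
      mul_le_mul_of_nonneg_right hb hYe0.le
    rw [← hWe] at hmul
    -- W^(p-1) ≤ Y^(p-1) - (p-1)*(Y-W)/Y * Y^(p-1) ≤ Y^(p-1) - (p-1)*d/Y
    have hfrac : (1 + (p - 1) * (W / Y - 1)) * Y ^ (p - 1)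
        = Y ^ (p - 1) - (p - 1) * ((Y - W) / Y) * Y ^ (p - 1) := by
      field_simp; ring
    rw [hfrac] at hmul
    have hd' : (Y - W) = d := by linarith
    rw [hd'] at hmul
    have hlast : (p - 1) * (d / Y) ≤ (p - 1) * (d / Y) * Y ^ (p - 1) := by
      nlinarith [hYe1, hd0, hY0, mul_pos (by linarith : (0:ℝ) < p - 1) (div_pos hd0 hY0)]
    calc (p - 1) * d / Y = (p - 1) * (d / Y) := by ring
    _ ≤ (p - 1) * (d / Y) * Y ^ (p - 1) := hlast
    _ = (p - 1) * (d / Y) * Y ^ (p - 1) := rfl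
    _ ≤ Y ^ (p - 1) - W ^ (p - 1) := by nlinarith [hmul]
  -- combine: D ≥ (W - X) * p * ((p-1)*d/Y) and D < 2
  have hDlt : Y ^ p - W ^ p - (Z ^ p - X ^ p) < 2 := by linarith
  have hWX0 : (0:ℝ) < W - X := by linarith
  have hε' : p - 1 = ε := by rw [hp]; ring
  have hkey : ε * d * (W - X) < 2 * Y := by
    have step : (W - X) * (p * ((p - 1) * d / Y)) ≤ (W - X) * g' c := by
      apply mul_le_mul_of_nonneg_left _ hWX0.le
      calc p * ((p - 1) * d / Y) ≤ p * ((W + d) ^ (p - 1) - W ^ (p - 1)) := by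
            apply mul_le_mul_of_nonneg_left _ (by linarith : (0:ℝ) ≤ p)
            rw [hYd]; exact hbern
        _ ≤ g' c := hCw
    have hlt : (W - X) * (p * ((p - 1) * d / Y)) < 2 := by
      calc (W - X) * (p * ((p - 1) * d / Y)) ≤ (W - X) * g' c := step
        _ = Y ^ p - W ^ p - (Z ^ p - X ^ p) := hDval.symm
        _ < 2 := hDlt
    rw [hε'] at hlt
    have hq : (0:ℝ) ≤ (p - 1) * (ε * d / Y) * (W - X) :=
      mul_nonneg (mul_nonneg (by linarith : (0:ℝ) ≤ p - 1) (le_of_lt (div_pos (mul_pos hε0 hd0) hY0))) hWX0.le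
    have heq : (W - X) * (ε * d / Y) = ε * d * (W - X) / Y := by ring
    have heq2 : (W - X) * (p * (ε * d / Y))
        = ε * d * (W - X) / Y + (p - 1) * (ε * d / Y) * (W - X) := by
      field_simp; ring
    have hfin : ε * d * (W - X) / Y < 2 := by linarith
    rw [div_lt_iff₀ hY0] at hfin
    linarith
  -- finish: ε d (Y - X) ≤ 2 ε d (W - X) < 4 Y
  have hdWX : d ≤ W - X := by rw [hdd]; linarith
  have hYX0 : (0:ℝ) < Y - X := by linarith
  rw [lt_div_iff₀ (by positivity : (0:ℝ) < ε * (Y - X))]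
  have hYX : Y - X = d + (W - X) := by rw [hdd]; linarith
  nlinarith [hkey, mul_pos hε0 hd0, hdWX]

theorem floor_power_quadruple_bound (ε : ℝ) (hε : ε ∈ Set.Ioo (0 : ℝ) 1)
    (p : ℝ) (hp : p = 1 + ε) (x y z w : ℤ)
    (hx : 1 ≤ x) (hxz : x < z) (hzw : z ≤ w) (hwy : w < y)
    (hsum : x + y = z + w)
    (hfloor : ⌊(x : ℝ) ^ p⌋ + ⌊(y : ℝ) ^ p⌋ = ⌊(z : ℝ) ^ p⌋ + ⌊(w : ℝ) ^ p⌋) :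
    (z : ℝ) - (x : ℝ) < 4 * (y : ℝ) / (ε * ((y : ℝ) - (x : ℝ))) := by
  obtain ⟨hε0, hε1⟩ := hε
  have hD2 : (x:ℝ) ^ p + (y:ℝ) ^ p < (z:ℝ) ^ p + (w:ℝ) ^ p + 2 := by
    have f1 := Int.lt_floor_add_one ((x:ℝ) ^ p)
    have f2 := Int.lt_floor_add_one ((y:ℝ) ^ p)
    have f3 := Int.floor_le ((z:ℝ) ^ p)
    have f4 := Int.floor_le ((w:ℝ) ^ p)
    have hc : ((⌊(x:ℝ) ^ p⌋ + ⌊(y:ℝ) ^ p⌋ : ℤ) : ℝ) = ((⌊(z:ℝ) ^ p⌋ + ⌊(w:ℝ) ^ p⌋ : ℤ) : ℝ) := by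
      exact_mod_cast hfloor
    push_cast at hc
    linarith
  exact key_real ε p hε0 hε1 hp _ _ _ _ (by exact_mod_cast hx) (by exact_mod_cast hxz)
    (by exact_mod_cast hzw) (by exact_mod_cast hwy) (by exact_mod_cast hsum) hD2
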